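/- Let N ⊆ {1,2,3,…} be nonempty and let c : N → {1,2,3,…} assign to each n ∈ N a positive integer c_n. Suppose 𝐜 ≥ 0 is a real number such that for every finitely supported family (a_n)_{n∈N} of nonnegative reals with Σ_{n∈N} a_n = 1 one has Σ_{n∈N, a_n>0} a_n·log(c_n/a_n) ≤ 𝐜·Σ_{n∈N} n·a_n. Then Σ_{n∈N} c_n·e^{−𝐜·n} ≤ 1. -/

import Mathlib

open Real Finset

lemma key19 (N : Set ℕ) (c : ℕ → ℕ) (hc : ∀ n ∈ N, 1 ≤ c n)
    (c0 : ℝ)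
    (hmain : ∀ s : Finset ℕ, ↑s ⊆ N → ∀ a : ℕ → ℝ, (∀ n, 0 ≤ a n) →
      (∀ n, n ∉ s → a n = 0) → ∑ n ∈ s, a n = 1 →
      ∑ n ∈ s, (if 0 < a n then a n * Real.log ((c n : ℝ) / a n) else 0) ≤
        c0 * ∑ n ∈ s, (n : ℝ) * a n)
    (s : Finset ℕ) (hs : ↑s ⊆ N) :
    ∑ n ∈ s, (c n : ℝ) * Real.exp (-c0 * n) ≤ 1 := by
  classical
  rcases s.eq_empty_or_nonempty with rfl | hne
  · simp
  set W : ℝ := ∑ n ∈ s, (c n : ℝ) * Real.exp (-c0 * n) with hW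
  have hterm : ∀ n ∈ s, 0 < (c n : ℝ) * Real.exp (-c0 * n) := by
    intro n hn
    have : 1 ≤ c n := hc n (hs hn)
    positivity
  have hWpos : 0 < W := Finset.sum_pos hterm hne
  set a : ℕ → ℝ := fun n => if n ∈ s then (c n : ℝ) * Real.exp (-c0 * n) / W else 0 with ha
  have ha0 : ∀ n, 0 ≤ a n := by
    intro n; simp only [ha]
    split
    · exact div_nonneg (le_of_lt (hterm n ‹_›)) hWpos.le
    · exact le_rfl
  have ha1 : ∀ n, n ∉ s → a n = 0 := by intro n hn; simp [ha, hn]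
  have hsum : ∑ n ∈ s, a n = 1 := by
    simp only [ha]
    rw [Finset.sum_ite_of_true (fun n hn => hn), ← Finset.sum_div, ← hW, div_self hWpos.ne']
  have h := hmain s hs a ha0 ha1 hsum
  have hlhs : ∑ n ∈ s, (if 0 < a n then a n * Real.log ((c n : ℝ) / a n) else 0)
      = Real.log W + c0 * ∑ n ∈ s, (n : ℝ) * a n := by
    have step : ∀ n ∈ s, (if 0 < a n then a n * Real.log ((c n : ℝ) / a n) else 0)
        = a n * Real.log W + c0 * ((n : ℝ) * a n) := by
      intro n hn
      have hcpos : (0:ℝ) < c n := by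
        have := hc n (hs hn); exact_mod_cast Nat.lt_of_lt_of_le Nat.zero_lt_one this
      have hapos : 0 < a n := by
        simp only [ha, if_pos hn]; exact div_pos (hterm n hn) hWpos
      rw [if_pos hapos]
      have hval : (c n : ℝ) / a n = W * Real.exp (c0 * n) := by
        simp only [ha, if_pos hn]
        rw [div_div_eq_mul_div,
          div_eq_iff (mul_pos hcpos (Real.exp_pos _)).ne']
        have he : Real.exp (c0 * n) * Real.exp (-c0 * n) = 1 := by
          rw [← Real.exp_add]
          norm_num
        linear_combination (-((c n : ℝ) * W)) * he
      rw [hval, Real.log_mul hWpos.ne' (Real.exp_ne_zero _), Real.log_exp]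
      ring
    rw [Finset.sum_congr rfl step, Finset.sum_add_distrib, ← Finset.mul_sum,
      ← Finset.sum_mul, hsum, one_mul, Finset.mul_sum]
  rw [hlhs] at h
  have hlog : Real.log W ≤ 0 := by linarith
  exact (Real.log_nonpos_iff hWpos.le).mp hlog

theorem stmt19 (N : Set ℕ) (hNne : N.Nonempty) (hN1 : ∀ n ∈ N, 1 ≤ n)
    (c : ℕ → ℕ) (hc : ∀ n ∈ N, 1 ≤ c n)
    (c0 : ℝ) (hc0 : 0 ≤ c0)
    (hmain : ∀ s : Finset ℕ, ↑s ⊆ N → ∀ a : ℕ → ℝ, (∀ n, 0 ≤ a n) →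
      (∀ n, n ∉ s → a n = 0) → ∑ n ∈ s, a n = 1 →
      ∑ n ∈ s, (if 0 < a n then a n * Real.log ((c n : ℝ) / a n) else 0) ≤
        c0 * ∑ n ∈ s, (n : ℝ) * a n) :
    Summable (fun n : ℕ => Set.indicator N (fun n => (c n : ℝ) * Real.exp (-c0 * n)) n) ∧
    ∑' n : ℕ, Set.indicator N (fun n => (c n : ℝ) * Real.exp (-c0 * n)) n ≤ 1 := by
  classical
  set f : ℕ → ℝ := Set.indicator N (fun n => (c n : ℝ) * Real.exp (-c0 * n)) with hf
  have hf0 : ∀ n, 0 ≤ f n := by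
    intro n
    apply Set.indicator_nonneg
    intro n _
    positivity
  have hbound : ∀ t : Finset ℕ, ∑ n ∈ t, f n ≤ 1 := by
    intro t
    have : ∑ n ∈ t, f n = ∑ n ∈ t.filter (· ∈ N), (c n : ℝ) * Real.exp (-c0 * n) := by
      rw [Finset.sum_filter]
      refine Finset.sum_congr rfl fun n _ => ?_
      by_cases hn : n ∈ N <;> simp [hf, Set.indicator_apply, hn]
    rw [this]
    exact key19 N c hc c0 hmain _ (by intro n hn; simpa using (Finset.mem_filter.mp hn).2)
  have hsummable : Summable f := by
    apply summable_of_sum_le (fun n => hf0 n) hbound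
  exact ⟨hsummable, Summable.tsum_le_of_sum_le hsummable hbound⟩
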